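/- arXiv:2110.06910 — 3 statements merged into one kernel-verified Lean document; each statement's English description precedes it below -/
import Mathlib

section
/- Let $\eta_t = (I - \gamma_t \widetilde\Sigma)\eta_{t-1}$ for $t \geq 1$ with $\eta_0 = f^*$, where $\widetilde\Sigma$ is a symmetric positive semi-definite matrix and $0 < \gamma_t \leq 1/\|\widetilde\Sigma\|_2$. Then with $\bar\eta_n = \frac{1}{n}\sum_{t=0}^{n-1}\eta_t$, one has $\langle \bar\eta_n, \widetilde\Sigma \bar\eta_n \rangle \leq \frac{1}{n}\max_{\lambda \in \mathrm{spec}(\widetilde\Sigma)} \lambda \sum_{t=0}^{n-1} \prod_{i=1}^{t}(1 - \gamma_i \lambda)^2 \cdot \|f^*\|^2$. -/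
open Matrix

theorem stmt_6 (m n : ℕ) (hm : 0 < m) (hn : 0 < n)
    (S : Matrix (Fin m) (Fin m) ℝ) (hS : S.PosSemidef)
    (γ : ℕ → ℝ) (hγpos : ∀ t, 1 ≤ t → 0 < γ t)
    (hγ : ∀ t, 1 ≤ t → ∀ i, γ t * hS.1.eigenvalues i ≤ 1)
    (fstar : Fin m → ℝ) (η : ℕ → Fin m → ℝ)
    (h0 : η 0 = fstar)
    (hrec : ∀ t, 1 ≤ t → η t = η (t - 1) - γ t • (S *ᵥ η (t - 1))) :
    ((n : ℝ)⁻¹ • ∑ t ∈ Finset.range n, η t) ⬝ᵥ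
        (S *ᵥ ((n : ℝ)⁻¹ • ∑ t ∈ Finset.range n, η t))
      ≤ (1 / (n : ℝ)) *
        (Finset.univ.sup' (Finset.univ_nonempty_iff.mpr ⟨⟨0, hm⟩⟩)
          (fun i => hS.1.eigenvalues i * ∑ t ∈ Finset.range n,
            ∏ j ∈ Finset.Icc 1 t, (1 - γ j * hS.1.eigenvalues i) ^ 2))
        * (fstar ⬝ᵥ fstar) := by
  classical
  set U : Matrix (Fin m) (Fin m) ℝ := (hS.1.eigenvectorUnitary : Matrix (Fin m) (Fin m) ℝ)
    with hU
  set lam : Fin m → ℝ := hS.1.eigenvalues with hlam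
  have hlampos : ∀ i, 0 ≤ lam i := fun i => hS.eigenvalues_nonneg i
  have hUU : U * star U = 1 :=
    (Matrix.mem_unitaryGroup_iff).mp hS.1.eigenvectorUnitary.2
  have hUU' : star U * U = 1 :=
    (Matrix.mem_unitaryGroup_iff').mp hS.1.eigenvectorUnitary.2
  have hdiag : S = U * Matrix.diagonal lam * star U := by
    have := hS.1.spectral_theorem
    simpa using this
  -- star U = Uᵀ over ℝ
  have hstar : star U = Uᵀ := by
    rw [Matrix.star_eq_conjTranspose, Matrix.conjTranspose_eq_transpose_of_trivial]
  set a : ℕ → Fin m → ℝ := fun t => star U *ᵥ η t with hadef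
  -- dot product preservation
  have hdot : ∀ v w : Fin m → ℝ, (star U *ᵥ v) ⬝ᵥ (star U *ᵥ w) = v ⬝ᵥ w := by
    intro v w
    have hUUt : U * Uᵀ = 1 := hstar ▸ hUU
    rw [Matrix.dotProduct_mulVec, hstar, Matrix.vecMul_mulVec, Matrix.transpose_transpose,
      hUUt, Matrix.vecMul_one]
  -- recursion in eigencoordinates
  have hstep : ∀ v : Fin m → ℝ, star U *ᵥ (S *ᵥ v) = Matrix.diagonal lam *ᵥ (star U *ᵥ v) := by
    intro v
    rw [hdiag, Matrix.mulVec_mulVec, Matrix.mulVec_mulVec, ← Matrix.mul_assoc,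
      ← Matrix.mul_assoc, hUU', Matrix.one_mul, ← Matrix.mulVec_mulVec]
  have ha : ∀ t i, a t i = (∏ j ∈ Finset.Icc 1 t, (1 - γ j * lam i)) * a 0 i := by
    intro t
    induction t with
    | zero => intro i; simp
    | succ t ih =>
        intro i
        have hr := hrec (t + 1) (by omega)
        simp only [Nat.add_sub_cancel] at hr
        have : a (t + 1) = a t - γ (t + 1) • (Matrix.diagonal lam *ᵥ a t) := by
          simp only [hadef, hr, Matrix.mulVec_sub, Matrix.mulVec_smul, hstep]
        rw [this]
        simp only [Pi.sub_apply, Pi.smul_apply, Matrix.mulVec_diagonal, smul_eq_mul]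
        rw [Finset.prod_Icc_succ_top (by omega), ih i]
        ring
  -- express the averaged vector in eigencoordinates
  set b : Fin m → ℝ := star U *ᵥ ((n : ℝ)⁻¹ • ∑ t ∈ Finset.range n, η t) with hbdef
  have hb : ∀ i, b i = (n : ℝ)⁻¹ * ((∑ t ∈ Finset.range n, ∏ j ∈ Finset.Icc 1 t,
      (1 - γ j * lam i)) * a 0 i) := by
    intro i
    have hsum : star U *ᵥ (∑ t ∈ Finset.range n, η t) = ∑ t ∈ Finset.range n, a t := by
      simp only [hadef, ← Matrix.mulVecLin_apply, map_sum]
    simp only [hbdef, Matrix.mulVec_smul, Pi.smul_apply, hsum, smul_eq_mul,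
      Finset.sum_apply]
    rw [Finset.sum_congr rfl (fun t _ => ha t i), ← Finset.sum_mul]
  -- LHS in eigencoordinates
  have hLHS : ((n : ℝ)⁻¹ • ∑ t ∈ Finset.range n, η t) ⬝ᵥ
      (S *ᵥ ((n : ℝ)⁻¹ • ∑ t ∈ Finset.range n, η t)) = ∑ i, lam i * b i ^ 2 := by
    set v : Fin m → ℝ := (n : ℝ)⁻¹ • ∑ t ∈ Finset.range n, η t
    have : S *ᵥ v = U *ᵥ (Matrix.diagonal lam *ᵥ (star U *ᵥ v)) := by
      rw [hdiag, Matrix.mulVec_mulVec, Matrix.mulVec_mulVec, Matrix.mul_assoc]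
    rw [this]
    rw [Matrix.dotProduct_mulVec v U _]
    have hv : v ᵥ* U = b := by
      rw [hbdef, hstar, Matrix.mulVec_transpose]
    rw [hv]
    simp [dotProduct, Matrix.mulVec_diagonal, sq, mul_comm, mul_left_comm, ← hbdef]
  have hfstar : fstar ⬝ᵥ fstar = ∑ i, a 0 i ^ 2 := by
    have := hdot (η 0) (η 0)
    rw [h0] at this
    rw [← this]
    simp [dotProduct, sq, hadef, h0]
  rw [hLHS, hfstar]
  -- the sup bound
  set M : ℝ := Finset.univ.sup' (Finset.univ_nonempty_iff.mpr ⟨⟨0, hm⟩⟩)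
      (fun i => lam i * ∑ t ∈ Finset.range n, ∏ j ∈ Finset.Icc 1 t, (1 - γ j * lam i) ^ 2)
    with hM
  have hMi : ∀ i, lam i * ∑ t ∈ Finset.range n, ∏ j ∈ Finset.Icc 1 t,
      (1 - γ j * lam i) ^ 2 ≤ M := by
    intro i
    rw [hM]
    exact Finset.le_sup' (f := fun i => lam i * ∑ t ∈ Finset.range n,
      ∏ j ∈ Finset.Icc 1 t, (1 - γ j * lam i) ^ 2) (Finset.mem_univ i)
  have key : ∀ i, lam i * b i ^ 2 ≤ (1 / (n : ℝ)) * M * a 0 i ^ 2 := by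
    intro i
    rw [hb i]
    have hcs : (∑ t ∈ Finset.range n, ∏ j ∈ Finset.Icc 1 t, (1 - γ j * lam i)) ^ 2
        ≤ (n : ℝ) * ∑ t ∈ Finset.range n, ∏ j ∈ Finset.Icc 1 t, (1 - γ j * lam i) ^ 2 := by
      have := sq_sum_le_card_mul_sum_sq
        (s := Finset.range n) (f := fun t => ∏ j ∈ Finset.Icc 1 t, (1 - γ j * lam i))
      simpa [Finset.prod_pow] using this
    have hn0 : (0 : ℝ) < (n : ℝ) := by exact_mod_cast hn
    calc lam i * ((n : ℝ)⁻¹ * ((∑ t ∈ Finset.range n, ∏ j ∈ Finset.Icc 1 t,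
            (1 - γ j * lam i)) * a 0 i)) ^ 2
        = (n : ℝ)⁻¹ ^ 2 * ((∑ t ∈ Finset.range n, ∏ j ∈ Finset.Icc 1 t,
            (1 - γ j * lam i)) ^ 2 * lam i) * a 0 i ^ 2 := by ring
      _ ≤ (n : ℝ)⁻¹ ^ 2 * (((n : ℝ) * ∑ t ∈ Finset.range n, ∏ j ∈ Finset.Icc 1 t,
            (1 - γ j * lam i) ^ 2) * lam i) * a 0 i ^ 2 := by
          apply mul_le_mul_of_nonneg_right _ (sq_nonneg _)
          apply mul_le_mul_of_nonneg_left _ (by positivity)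
          exact mul_le_mul_of_nonneg_right hcs (hlampos i)
      _ = (1 / (n : ℝ)) * (lam i * ∑ t ∈ Finset.range n, ∏ j ∈ Finset.Icc 1 t,
            (1 - γ j * lam i) ^ 2) * a 0 i ^ 2 := by
          field_simp
          ring
      _ ≤ (1 / (n : ℝ)) * M * a 0 i ^ 2 := by
          apply mul_le_mul_of_nonneg_right _ (sq_nonneg _)
          exact mul_le_mul_of_nonneg_left (hMi i) (by positivity)
  calc ∑ i, lam i * b i ^ 2 ≤ ∑ i, (1 / (n : ℝ)) * M * a 0 i ^ 2 :=
        Finset.sum_le_sum fun i _ => key i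
    _ = (1 / (n : ℝ)) * M * ∑ i, a 0 i ^ 2 := by rw [← Finset.mul_sum]
end

section
/- For any $\lambda > 0$, $\gamma_0 > 0$, $\zeta \in [0,1)$, and integer $n \geq 1$: $\sum_{t=0}^{n-1} \exp\left(-2\gamma_0 \lambda \frac{(t+1)^{1-\zeta}-1}{1-\zeta}\right) \leq 1 + \min\left\{\frac{n^\zeta}{2\gamma_0\lambda},\; n\right\}$. -/
open Real Finset

theorem stmt_7 (lam γ0 ζ : ℝ) (hlam : 0 < lam) (hγ : 0 < γ0)
    (hζ0 : 0 ≤ ζ) (hζ1 : ζ < 1) (n : ℕ) (hn : 1 ≤ n) :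
    ∑ t ∈ Finset.range n,
        Real.exp (-(2 * γ0 * lam * ((((t : ℝ) + 1) ^ (1 - ζ) - 1) / (1 - ζ))))
      ≤ 1 + min ((n : ℝ) ^ ζ / (2 * γ0 * lam)) (n : ℝ) := by
  set c : ℝ := 2 * γ0 * lam with hc
  have hcpos : 0 < c := by positivity
  set p : ℝ := 1 - ζ with hp
  have hppos : 0 < p := by linarith
  have hp1 : p ≤ 1 := by linarith
  have hN1 : (1 : ℝ) ≤ (n : ℝ) := by exact_mod_cast hn
  have hNpos : (0 : ℝ) < (n : ℝ) := by linarith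
  -- each term is ≤ 1
  have hterm1 : ∀ t : ℕ, Real.exp (-(c * ((((t : ℝ) + 1) ^ p - 1) / p))) ≤ 1 := by
    intro t
    rw [Real.exp_le_one_iff, neg_nonpos]
    have h1 : (1 : ℝ) ≤ ((t : ℝ) + 1) ^ p := by
      exact Real.one_le_rpow (le_add_of_nonneg_left (Nat.cast_nonneg t)) hppos.le
    have h2 := div_nonneg (by linarith : (0:ℝ) ≤ ((t : ℝ) + 1) ^ p - 1) hppos.le
    exact mul_nonneg hcpos.le h2
  have hboundN : ∑ t ∈ Finset.range n,
      Real.exp (-(c * ((((t : ℝ) + 1) ^ p - 1) / p))) ≤ 1 + (n : ℝ) := by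
    calc ∑ t ∈ Finset.range n, Real.exp (-(c * ((((t : ℝ) + 1) ^ p - 1) / p)))
        ≤ ∑ t ∈ Finset.range n, (1 : ℝ) := Finset.sum_le_sum fun t _ => hterm1 t
      _ = (n : ℝ) := by simp
      _ ≤ 1 + (n : ℝ) := by linarith
  -- key exponent bound: for t+1 ≤ n, (t+1)^p ≥ 1 + p * t * n^(-ζ)
  have key : ∀ t : ℕ, t + 1 ≤ n →
      1 + p * t * (n : ℝ) ^ (-ζ) ≤ ((t : ℝ) + 1) ^ p := by
    intro t ht
    induction t with
    | zero => simp
    | succ s ih =>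
      have hs : s + 1 ≤ n := by omega
      have ih' := ih hs
      -- show ((s+1)+1)^p ≥ (s+1)^p + p * n^(-ζ)
      have hb : (0 : ℝ) < (s : ℝ) + 1 + 1 := by positivity
      have hbN : (s : ℝ) + 1 + 1 ≤ (n : ℝ) := by
        have : (s + 2 : ℕ) ≤ n := by omega
        have := (Nat.cast_le (α := ℝ)).2 this
        push_cast at this
        linarith
      have step : ((s : ℝ) + 1) ^ p + p * ((s : ℝ) + 1 + 1) ^ (p - 1)
          ≤ ((s : ℝ) + 1 + 1) ^ p := by
        set b : ℝ := (s : ℝ) + 1 + 1 with hbdef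
        have hbpos : (0 : ℝ) < b := hb
        have hber : ((s : ℝ) + 1) / b = 1 + (-1 / b) := by
          rw [hbdef]; field_simp; ring
        have hBern : (1 + (-1 / b)) ^ p ≤ 1 + p * (-1 / b) :=
          rpow_one_add_le_one_add_mul_self
            (by rw [neg_div]; have : 1 / b ≤ 1 := by
                  rw [div_le_one hbpos]; linarith
                linarith) hppos.le hp1
        have h1 : (((s : ℝ) + 1) / b) ^ p ≤ 1 + p * (-1 / b) := by
          rw [hber]; exact hBern
        have h2 : (((s : ℝ) + 1) / b) ^ p = ((s : ℝ) + 1) ^ p / b ^ p :=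
          Real.div_rpow (by positivity) hbpos.le p
        rw [h2, div_le_iff₀ (by positivity)] at h1
        have h3 : (1 + p * (-1 / b)) * b ^ p = b ^ p - p * b ^ (p - 1) := by
          have : b ^ (p - 1) = b ^ p / b := by
            rw [Real.rpow_sub_one (ne_of_gt hbpos)]
          rw [this]; field_simp; ring
        rw [h3] at h1
        linarith
      have hmono : (n : ℝ) ^ (p - 1) ≤ ((s : ℝ) + 1 + 1) ^ (p - 1) :=
        Real.rpow_le_rpow_of_nonpos hb hbN (by linarith)
      have hpe : p - 1 = -ζ := by rw [hp]; ring
      rw [hpe] at hmono step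
      have : 1 + p * (s : ℝ) * (n : ℝ) ^ (-ζ) + p * (n : ℝ) ^ (-ζ)
          ≤ ((s : ℝ) + 1 + 1) ^ p := by
        have := mul_le_mul_of_nonneg_left hmono hppos.le
        push_cast
        nlinarith
      push_cast
      push_cast at this
      nlinarith
  -- bound by geometric series
  set x : ℝ := c * (n : ℝ) ^ (-ζ) with hx
  have hxpos : 0 < x := by
    have : (0:ℝ) < (n : ℝ) ^ (-ζ) := Real.rpow_pos_of_pos hNpos _
    positivity
  set r : ℝ := Real.exp (-x) with hr
  have hr0 : 0 < r := Real.exp_pos _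
  have hr1 : r < 1 := by
    rw [hr, Real.exp_lt_one_iff]; linarith
  have hgeom : ∑ t ∈ Finset.range n,
      Real.exp (-(c * ((((t : ℝ) + 1) ^ p - 1) / p))) ≤ ∑ t ∈ Finset.range n, r ^ t := by
    apply Finset.sum_le_sum
    intro t ht
    rw [Finset.mem_range] at ht
    have hkey := key t (by omega)
    have hexp : x * t ≤ c * ((((t : ℝ) + 1) ^ p - 1) / p) := by
      rw [hx]
      have h1 : (t : ℝ) * (n : ℝ) ^ (-ζ) ≤ (((t : ℝ) + 1) ^ p - 1) / p := by
        rw [le_div_iff₀ hppos]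
        nlinarith [hkey]
      calc c * (n : ℝ) ^ (-ζ) * t = c * ((t : ℝ) * (n : ℝ) ^ (-ζ)) := by ring
        _ ≤ c * ((((t : ℝ) + 1) ^ p - 1) / p) := by
            exact mul_le_mul_of_nonneg_left h1 hcpos.le
    calc Real.exp (-(c * ((((t : ℝ) + 1) ^ p - 1) / p))) ≤ Real.exp (-(x * t)) := by
          apply Real.exp_le_exp.2; linarith
      _ = r ^ t := by
          rw [hr, ← Real.exp_nat_mul]
          congr 1; ring
  have hgeomsum : ∑ t ∈ Finset.range n, r ^ t ≤ (1 - r)⁻¹ := by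
    rw [geom_sum_eq (ne_of_lt hr1)]
    rw [div_le_iff_of_neg (by linarith : r - 1 < 0)]
    have hrn : (0:ℝ) ≤ r ^ n := by positivity
    have : (1 - r)⁻¹ * (1 - r) = 1 := inv_mul_cancel₀ (by linarith)
    nlinarith
  have hfinal : (1 - r)⁻¹ ≤ 1 + 1 / x := by
    rw [inv_le_iff_one_le_mul₀ (by linarith : (0:ℝ) < 1 - r)]
    have hexpx : x + 1 ≤ Real.exp x := Real.add_one_le_exp x
    have hrx : r * Real.exp x = 1 := by
      rw [hr, ← Real.exp_add]; simp
    have hx1 : 1 / x * x = 1 := by field_simp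
    nlinarith [Real.exp_pos x, mul_pos hr0 hxpos]
  have hxval : 1 / x = (n : ℝ) ^ ζ / c := by
    rw [hx, Real.rpow_neg hNpos.le]
    have hpow : (0:ℝ) < (n : ℝ) ^ ζ := Real.rpow_pos_of_pos hNpos _
    field_simp
  have hboundA : ∑ t ∈ Finset.range n,
      Real.exp (-(c * ((((t : ℝ) + 1) ^ p - 1) / p))) ≤ 1 + (n : ℝ) ^ ζ / c := by
    calc ∑ t ∈ Finset.range n, Real.exp (-(c * ((((t : ℝ) + 1) ^ p - 1) / p)))
        ≤ ∑ t ∈ Finset.range n, r ^ t := hgeom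
      _ ≤ (1 - r)⁻¹ := hgeomsum
      _ ≤ 1 + 1 / x := hfinal
      _ = 1 + (n : ℝ) ^ ζ / c := by rw [hxval]
  rcases le_total ((n : ℝ) ^ ζ / c) (n : ℝ) with h | h
  · rw [min_eq_left h]; exact hboundA
  · rw [min_eq_right h]; exact hboundN
end

section
/- Let $(\alpha_t)_{t\geq 0}$ be square-integrable random vectors in $\mathbb{R}^m$ with $\alpha_0 = 0$, adapted to a filtration $(\mathcal F_t)$, satisfying for each $t\geq 1$: $\mathbb{E}[\|\alpha_t\|^2 \mid \mathcal F_{t-1}] \leq \|\alpha_{t-1}\|^2 + 2\gamma_t^2 h_{t-1} - 2\gamma_t(1 - \gamma_t R)\langle \alpha_{t-1}, \Sigma \alpha_{t-1}\rangle$, where $\Sigma$ is symmetric PSD, $R > 0$, $h_{t-1} \geq 0$ deterministic, and $0 < \gamma_t \leq \gamma_0 < 1/R$ nonincreasing. Then with $\bar\alpha_n = \frac1n\sum_{t=0}^{n-1}\alpha_t$: $\mathbb{E}\langle\bar\alpha_n, \Sigma\bar\alpha_n\rangle \leq \frac{1}{2n(1-\gamma_0 R)}\left(\sum_{k=1}^{n-1}\mathbb{E}\|\alpha_k\|^2\left(\frac{1}{\gamma_{k+1}}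 - \frac{1}{\gamma_k}\right) + 2\sum_{t=0}^{n-1}\gamma_{t+1} h_t\right)$. -/
open MeasureTheory Matrix Finset

variable {m : ℕ}

lemma sum_dot {ι : Type*} (s : Finset ι) (f : ι → Fin m → ℝ) (v : Fin m → ℝ) :
    (∑ i ∈ s, f i) ⬝ᵥ v = ∑ i ∈ s, f i ⬝ᵥ v := by
  classical
  induction s using Finset.induction with
  | empty => simp [dotProduct]
  | insert _ _ hnot ih => simp [Finset.sum_insert hnot, add_dotProduct, ih]

lemma dot_sum {ι : Type*} (s : Finset ι) (v : Fin m → ℝ) (f : ι → Fin m → ℝ) :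
    v ⬝ᵥ (∑ i ∈ s, f i) = ∑ i ∈ s, v ⬝ᵥ f i := by
  classical
  induction s using Finset.induction with
  | empty => simp [dotProduct]
  | insert _ _ hnot ih => simp [Finset.sum_insert hnot, dotProduct_add, ih]

lemma mulVec_sum' {ι : Type*} (S : Matrix (Fin m) (Fin m) ℝ) (s : Finset ι)
    (f : ι → Fin m → ℝ) : S *ᵥ (∑ i ∈ s, f i) = ∑ i ∈ s, S *ᵥ f i := by
  classical
  induction s using Finset.induction with
  | empty => simp
  | insert _ _ hnot ih => simp [Finset.sum_insert hnot, Matrix.mulVec_add, ih]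

lemma quad_nonneg {S : Matrix (Fin m) (Fin m) ℝ} (hS : S.PosSemidef) (x : Fin m → ℝ) :
    0 ≤ x ⬝ᵥ (S *ᵥ x) := by
  simpa using hS.dotProduct_mulVec_nonneg x

lemma quad_comm {S : Matrix (Fin m) (Fin m) ℝ} (hS : S.PosSemidef) (x y : Fin m → ℝ) :
    x ⬝ᵥ (S *ᵥ y) = y ⬝ᵥ (S *ᵥ x) := by
  have hsymm : Sᵀ = S := Matrix.IsSymm.eq (by simpa using hS.1)
  rw [Matrix.dotProduct_mulVec, ← Matrix.mulVec_transpose, hsymm, dotProduct_comm]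

lemma quad_pair {S : Matrix (Fin m) (Fin m) ℝ} (hS : S.PosSemidef) (x y : Fin m → ℝ) :
    2 * (x ⬝ᵥ (S *ᵥ y)) ≤ x ⬝ᵥ (S *ᵥ x) + y ⬝ᵥ (S *ᵥ y) := by
  have h0 := quad_nonneg hS (x - y)
  rw [Matrix.mulVec_sub, sub_dotProduct, dotProduct_sub,
    dotProduct_sub] at h0
  have := quad_comm hS x y
  linarith

lemma quad_sum_le {S : Matrix (Fin m) (Fin m) ℝ} (hS : S.PosSemidef)
    (n : ℕ) (x : ℕ → Fin m → ℝ) :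
    (∑ t ∈ range n, x t) ⬝ᵥ (S *ᵥ (∑ t ∈ range n, x t))
      ≤ n * ∑ t ∈ range n, x t ⬝ᵥ (S *ᵥ x t) := by
  rw [mulVec_sum', sum_dot]
  calc ∑ s ∈ range n, x s ⬝ᵥ ∑ t ∈ range n, S *ᵥ x t
      = ∑ s ∈ range n, ∑ t ∈ range n, x s ⬝ᵥ (S *ᵥ x t) := by
        refine Finset.sum_congr rfl fun s _ => ?_; rw [dot_sum]
    _ ≤ ∑ s ∈ range n, ∑ t ∈ range n,
          ((x s ⬝ᵥ (S *ᵥ x s)) + (x t ⬝ᵥ (S *ᵥ x t))) / 2 := by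
        refine Finset.sum_le_sum fun s _ => Finset.sum_le_sum fun t _ => ?_
        have := quad_pair hS (x s) (x t)
        linarith
    _ = n * ∑ t ∈ range n, x t ⬝ᵥ (S *ᵥ x t) := by
        simp only [add_div, Finset.sum_add_distrib, Finset.sum_const,
          Finset.card_range, nsmul_eq_mul, ← Finset.mul_sum, ← Finset.sum_div]
        ring

lemma key_arith (a q g hs : ℕ → ℝ) (C : ℝ) (hC : 0 < C)
    (ha0 : a 0 = 0) (han : ∀ k, 0 ≤ a k) (hgpos : ∀ t, 0 < g t)
    (hstep : ∀ t, C * q t ≤ (a t - a (t + 1)) / (2 * g (t + 1)) + g (t + 1) * hs t)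
    (n : ℕ) (hn : 1 ≤ n) :
    C * ∑ t ∈ range n, q t ≤
      (1 / 2) * ∑ k ∈ Finset.Icc 1 (n - 1), a k * (1 / g (k + 1) - 1 / g k)
        + ∑ t ∈ range n, g (t + 1) * hs t := by
  have hIcc : Finset.Icc 1 (n - 1) = Finset.Ico 1 n := by
    rw [← Finset.Ico_add_one_right_eq_Icc]
    congr 1
    omega
  have hA1 : ∑ t ∈ range n, a t / (2 * g (t + 1))
      = ∑ k ∈ Finset.Ico 1 n, a k / (2 * g (k + 1)) := by
    rw [Finset.range_eq_Ico, Finset.sum_eq_sum_Ico_succ_bot hn]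
    simp [ha0]
  have hA2 : ∑ t ∈ range n, a (t + 1) / (2 * g (t + 1))
      = ∑ k ∈ Finset.Ico 1 n, a k / (2 * g k) + a n / (2 * g n) := by
    have : ∑ t ∈ range n, a (t + 1) / (2 * g (t + 1))
        = ∑ k ∈ Finset.Ico 1 (n + 1), a k / (2 * g k) := by
      rw [Finset.sum_Ico_eq_sum_range]
      simp [add_comm 1]
    rw [this, Finset.sum_Ico_succ_top hn]
  calc C * ∑ t ∈ range n, q t = ∑ t ∈ range n, C * q t := Finset.mul_sum _ _ _
    _ ≤ ∑ t ∈ range n, ((a t - a (t + 1)) / (2 * g (t + 1)) + g (t + 1) * hs t) :=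
        Finset.sum_le_sum fun t _ => hstep t
    _ = (∑ t ∈ range n, a t / (2 * g (t + 1))
          - ∑ t ∈ range n, a (t + 1) / (2 * g (t + 1)))
        + ∑ t ∈ range n, g (t + 1) * hs t := by
        rw [← Finset.sum_sub_distrib, Finset.sum_add_distrib]
        congr 1
        exact Finset.sum_congr rfl fun t _ => by rw [sub_div]
    _ ≤ ∑ k ∈ Finset.Ico 1 n, (a k / (2 * g (k + 1)) - a k / (2 * g k))
        + ∑ t ∈ range n, g (t + 1) * hs t := by
        rw [hA1, hA2, Finset.sum_sub_distrib]
        have : 0 ≤ a n / (2 * g n) := div_nonneg (han n) (by have := hgpos n; positivity)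
        linarith
    _ = (1 / 2) * ∑ k ∈ Finset.Icc 1 (n - 1), a k * (1 / g (k + 1) - 1 / g k)
        + ∑ t ∈ range n, g (t + 1) * hs t := by
        rw [hIcc, Finset.mul_sum]
        congr 1
        refine Finset.sum_congr rfl fun k _ => ?_
        have h1 := (hgpos k).ne'
        have h2 := (hgpos (k + 1)).ne'
        field_simp

theorem stmt_17 {Ω : Type*} {m0 : MeasurableSpace Ω} (μ : Measure Ω)
    [IsProbabilityMeasure μ] (m : ℕ)
    (F : Filtration ℕ m0) (α : ℕ → Ω → Fin m → ℝ) (hadapted : Adapted F α)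
    (hα0 : ∀ ω, α 0 ω = 0)
    (S : Matrix (Fin m) (Fin m) ℝ) (hS : S.PosSemidef)
    (R : ℝ) (hR : 0 < R) (h : ℕ → ℝ) (hh : ∀ t, 0 ≤ h t)
    (γ : ℕ → ℝ) (hγpos : ∀ t, 0 < γ t) (hγmono : Antitone γ)
    (hγ0 : γ 0 * R < 1)
    (hint1 : ∀ t, Integrable (fun ω => α t ω ⬝ᵥ α t ω) μ)
    (hint2 : ∀ t, Integrable (fun ω => α t ω ⬝ᵥ (S *ᵥ α t ω)) μ)
    (hrec : ∀ t : ℕ, 1 ≤ t →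
      (μ[(fun ω => α t ω ⬝ᵥ α t ω)|F (t - 1)]) ≤ᵐ[μ]
        (fun ω => α (t - 1) ω ⬝ᵥ α (t - 1) ω + 2 * γ t ^ 2 * h (t - 1)
          - 2 * γ t * (1 - γ t * R) * (α (t - 1) ω ⬝ᵥ (S *ᵥ α (t - 1) ω))))
    (n : ℕ) (hn : 1 ≤ n) :
    ∫ ω, (((n : ℝ)⁻¹ • ∑ t ∈ Finset.range n, α t ω) ⬝ᵥ
        (S *ᵥ ((n : ℝ)⁻¹ • ∑ t ∈ Finset.range n, α t ω))) ∂μ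
      ≤ (1 / (2 * n * (1 - γ 0 * R))) *
        ((∑ k ∈ Finset.Icc 1 (n - 1),
            (∫ ω, α k ω ⬝ᵥ α k ω ∂μ) * (1 / γ (k + 1) - 1 / γ k))
          + 2 * ∑ t ∈ Finset.range n, γ (t + 1) * h t) := by
  have hC : 0 < 1 - γ 0 * R := by linarith
  set a : ℕ → ℝ := fun k => ∫ ω, α k ω ⬝ᵥ α k ω ∂μ with ha
  set q : ℕ → ℝ := fun k => ∫ ω, α k ω ⬝ᵥ (S *ᵥ α k ω) ∂μ with hq
  have hqn : ∀ k, 0 ≤ q k := fun k =>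
    integral_nonneg fun ω => quad_nonneg hS _
  have han : ∀ k, 0 ≤ a k := fun k =>
    integral_nonneg fun ω => Finset.sum_nonneg fun i _ => mul_self_nonneg _
  have ha0' : a 0 = 0 := by
    simp only [ha, hα0]
    simp [dotProduct]
  -- Step B: expectation recursion
  have hB : ∀ t : ℕ, a (t + 1) ≤ a t + 2 * γ (t + 1) ^ 2 * h t
      - 2 * γ (t + 1) * (1 - γ (t + 1) * R) * q t := by
    intro t
    have hr := hrec (t + 1) (Nat.le_add_left 1 t)
    simp only [Nat.add_sub_cancel] at hr
    have hgi : Integrable (fun ω => α t ω ⬝ᵥ α t ω + 2 * γ (t + 1) ^ 2 * h t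
        - 2 * γ (t + 1) * (1 - γ (t + 1) * R) * (α t ω ⬝ᵥ (S *ᵥ α t ω))) μ :=
      ((hint1 t).add (integrable_const _)).sub ((hint2 t).const_mul _)
    have h1 : ∫ ω, (μ[(fun ω => α (t + 1) ω ⬝ᵥ α (t + 1) ω)|F t]) ω ∂μ = a (t + 1) :=
      integral_condExp (F.le t)
    have h2 := integral_mono_ae integrable_condExp hgi hr
    rw [h1] at h2
    have h3 : ∫ ω, (α t ω ⬝ᵥ α t ω + 2 * γ (t + 1) ^ 2 * h t
        - 2 * γ (t + 1) * (1 - γ (t + 1) * R) * (α t ω ⬝ᵥ (S *ᵥ α t ω))) ∂μ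
        = a t + 2 * γ (t + 1) ^ 2 * h t - 2 * γ (t + 1) * (1 - γ (t + 1) * R) * q t := by
      have i1 : Integrable (fun ω => α t ω ⬝ᵥ α t ω + 2 * γ (t + 1) ^ 2 * h t) μ :=
        (hint1 t).add (integrable_const _)
      have i2 : Integrable (fun ω =>
          2 * γ (t + 1) * (1 - γ (t + 1) * R) * (α t ω ⬝ᵥ (S *ᵥ α t ω))) μ :=
        (hint2 t).const_mul _
      rw [integral_sub i1 i2, integral_add (hint1 t) (integrable_const _),
        integral_const, integral_const_mul]
      simp [ha, hq]
    rw [h3] at h2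
    exact h2
  -- Step C: per-step inequality
  have hstep : ∀ t : ℕ, (1 - γ 0 * R) * q t ≤
      (a t - a (t + 1)) / (2 * γ (t + 1)) + γ (t + 1) * h t := by
    intro t
    have hg1 : 0 < γ (t + 1) := hγpos _
    have hle : γ (t + 1) ≤ γ 0 := hγmono (Nat.zero_le _)
    have hB' := hB t
    have hle2 : (1 - γ 0 * R) * q t ≤ (1 - γ (t + 1) * R) * q t :=
      mul_le_mul_of_nonneg_right
        (by nlinarith [mul_le_mul_of_nonneg_right hle hR.le]) (hqn t)
    have key : 2 * γ (t + 1) * ((1 - γ 0 * R) * q t)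
        ≤ a t - a (t + 1) + 2 * γ (t + 1) ^ 2 * h t := by
      have h2g : (0:ℝ) ≤ 2 * γ (t + 1) := by positivity
      have hmm := mul_le_mul_of_nonneg_left hle2 h2g
      nlinarith [hB']
    have h4 : (1 - γ 0 * R) * q t
        ≤ (a t - a (t + 1) + 2 * γ (t + 1) ^ 2 * h t) / (2 * γ (t + 1)) := by
      rw [le_div_iff₀ (by positivity)]
      linarith
    have h5 : (a t - a (t + 1) + 2 * γ (t + 1) ^ 2 * h t) / (2 * γ (t + 1))
        = (a t - a (t + 1)) / (2 * γ (t + 1)) + γ (t + 1) * h t := by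
      field_simp
    linarith [h4, h5.le, h5.ge]
  -- Step D: sum it up
  have hKA := key_arith a q γ h (1 - γ 0 * R) hC ha0' han hγpos hstep n hn
  -- Step A: pointwise quadratic-form bound on the average
  have hn0 : (0:ℝ) < n := by exact_mod_cast hn
  have hpt : ∀ ω, (((n : ℝ)⁻¹ • ∑ t ∈ Finset.range n, α t ω) ⬝ᵥ
      (S *ᵥ ((n : ℝ)⁻¹ • ∑ t ∈ Finset.range n, α t ω)))
      ≤ (n : ℝ)⁻¹ * ∑ t ∈ Finset.range n, α t ω ⬝ᵥ (S *ᵥ α t ω) := by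
    intro ω
    have hqs := quad_sum_le hS n (fun t => α t ω)
    rw [Matrix.mulVec_smul, smul_dotProduct, dotProduct_smul,
      smul_eq_mul, smul_eq_mul]
    have hmul : (n:ℝ)⁻¹ * ((n:ℝ)⁻¹ * ((∑ t ∈ Finset.range n, α t ω) ⬝ᵥ
        (S *ᵥ (∑ t ∈ Finset.range n, α t ω))))
        ≤ (n:ℝ)⁻¹ * ((n:ℝ)⁻¹ * ((n:ℝ) * ∑ t ∈ Finset.range n, α t ω ⬝ᵥ (S *ᵥ α t ω))) := by
      apply mul_le_mul_of_nonneg_left _ (by positivity)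
      exact mul_le_mul_of_nonneg_left hqs (by positivity)
    have heq : (n:ℝ)⁻¹ * ((n:ℝ)⁻¹ * ((n:ℝ) * ∑ t ∈ Finset.range n, α t ω ⬝ᵥ (S *ᵥ α t ω)))
        = (n:ℝ)⁻¹ * ∑ t ∈ Finset.range n, α t ω ⬝ᵥ (S *ᵥ α t ω) := by
      field_simp
    linarith [hmul, heq.le, heq.ge]
  have hgint : Integrable (fun ω => (n : ℝ)⁻¹ *
      ∑ t ∈ Finset.range n, α t ω ⬝ᵥ (S *ᵥ α t ω)) μ :=
    (integrable_finset_sum _ fun t _ => hint2 t).const_mul _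
  have hInt : ∫ ω, (((n : ℝ)⁻¹ • ∑ t ∈ Finset.range n, α t ω) ⬝ᵥ
      (S *ᵥ ((n : ℝ)⁻¹ • ∑ t ∈ Finset.range n, α t ω))) ∂μ
      ≤ ∫ ω, (n : ℝ)⁻¹ * ∑ t ∈ Finset.range n, α t ω ⬝ᵥ (S *ᵥ α t ω) ∂μ :=
    integral_mono_of_nonneg
      (Filter.Eventually.of_forall fun ω => quad_nonneg hS _)
      hgint (Filter.Eventually.of_forall hpt)
  have hIntEq : ∫ ω, (n : ℝ)⁻¹ * ∑ t ∈ Finset.range n, α t ω ⬝ᵥ (S *ᵥ α t ω) ∂μ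
      = (n : ℝ)⁻¹ * ∑ t ∈ Finset.range n, q t := by
    rw [integral_const_mul, integral_finset_sum _ fun t _ => hint2 t]
  -- combine
  set S1 : ℝ := ∑ k ∈ Finset.Icc 1 (n - 1), a k * (1 / γ (k + 1) - 1 / γ k) with hS1
  set S2 : ℝ := ∑ t ∈ Finset.range n, γ (t + 1) * h t with hS2
  have h6 : ∑ t ∈ Finset.range n, q t ≤ ((1 / 2) * S1 + S2) / (1 - γ 0 * R) :=
    (le_div_iff₀ hC).mpr (by linarith [hKA])
  have h7 : (n : ℝ)⁻¹ * ∑ t ∈ Finset.range n, q t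
      ≤ (n : ℝ)⁻¹ * (((1 / 2) * S1 + S2) / (1 - γ 0 * R)) :=
    mul_le_mul_of_nonneg_left h6 (by positivity)
  have h8 : (n : ℝ)⁻¹ * (((1 / 2) * S1 + S2) / (1 - γ 0 * R))
      = (1 / (2 * n * (1 - γ 0 * R))) * (S1 + 2 * S2) := by
    field_simp
  calc ∫ ω, (((n : ℝ)⁻¹ • ∑ t ∈ Finset.range n, α t ω) ⬝ᵥ
        (S *ᵥ ((n : ℝ)⁻¹ • ∑ t ∈ Finset.range n, α t ω))) ∂μ
      ≤ (n : ℝ)⁻¹ * ∑ t ∈ Finset.range n, q t := hIntEq ▸ hInt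
    _ ≤ (1 / (2 * n * (1 - γ 0 * R))) * (S1 + 2 * S2) := by
        rw [← h8]; exact h7
end
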